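/- Fix an integer γ ≥ 1 and a real number h. With A(h) the γ×γ upper triangular matrix with entries a_{αβ}(h) = h^{β−α}/(β−α)! for α ≤ β and 0 otherwise, B(h) the γ×γ matrix with entries b_{αβ}(h) = h^{2γ−α−β−1}/(2γ−α−β−1)!, C(h) the γ×γ matrix with entries c_{αβ}(h) = h^{2γ−α−β−1}/((2γ−α−β−1)·(γ−α−1)!·(γ−β−1)!), and D the γ×γ diagonal matrix with entries d_{αα} = (−1)^{γ−α−1}, one has C(h) = A(h) · D · B(h). -/

import Mathlib

open Matrix Finset Nat

/-- The upper triangular matrix `A(h)` with entries `h^(β-α)/(β-α)!` for `α ≤ β`. -/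
noncomputable def matA (γ : ℕ) (h : ℝ) : Matrix (Fin γ) (Fin γ) ℝ :=
  fun α β =>
    if (α : ℕ) ≤ (β : ℕ) then h ^ ((β : ℕ) - (α : ℕ)) / (((β : ℕ) - (α : ℕ)).factorial : ℝ)
    else 0

/-- The matrix `B(h)` with entries `h^(2γ-α-β-1)/(2γ-α-β-1)!`. -/
noncomputable def matB (γ : ℕ) (h : ℝ) : Matrix (Fin γ) (Fin γ) ℝ :=
  fun α β =>
    h ^ (2 * γ - (α : ℕ) - (β : ℕ) - 1) / ((2 * γ - (α : ℕ) - (β : ℕ) - 1).factorial : ℝ)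

/-- The matrix `C(h)` with entries `h^(2γ-α-β-1)/((2γ-α-β-1)·(γ-α-1)!·(γ-β-1)!)`. -/
noncomputable def matC (γ : ℕ) (h : ℝ) : Matrix (Fin γ) (Fin γ) ℝ :=
  fun α β =>
    h ^ (2 * γ - (α : ℕ) - (β : ℕ) - 1) /
      (((2 * γ - (α : ℕ) - (β : ℕ) - 1) * (γ - (α : ℕ) - 1).factorial *
          (γ - (β : ℕ) - 1).factorial : ℕ) : ℝ)

/-- The diagonal matrix `D` with entries `(-1)^(γ-α-1)`. -/
noncomputable def matD (γ : ℕ) : Matrix (Fin γ) (Fin γ) ℝ :=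
  Matrix.diagonal fun α : Fin γ => (-1 : ℝ) ^ (γ - (α : ℕ) - 1)

/-- The lower triangular matrix `L(h)` from the LU decomposition of `C(h)`. -/
noncomputable def matL (γ : ℕ) (h : ℝ) : Matrix (Fin γ) (Fin γ) ℝ :=
  fun α β =>
    if (β : ℕ) ≤ (α : ℕ) then
      h ^ ((β : ℤ) - (α : ℤ)) *
        (((α : ℕ).factorial * (2 * γ - (β : ℕ) - 1).factorial * (γ - (β : ℕ) - 1).factorial *
            (2 * γ - (α : ℕ) - (β : ℕ) - 2).factorial : ℕ) : ℝ) /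
        (((β : ℕ).factorial * ((α : ℕ) - (β : ℕ)).factorial * (2 * γ - (α : ℕ) - 1).factorial *
            (γ - (α : ℕ) - 1).factorial * (2 * γ - 2 * (β : ℕ) - 2).factorial : ℕ) : ℝ)
    else 0

/-- The upper triangular matrix `U(h)` from the LU decomposition of `C(h)`. -/
noncomputable def matU (γ : ℕ) (h : ℝ) : Matrix (Fin γ) (Fin γ) ℝ :=
  fun α β =>
    if (α : ℕ) ≤ (β : ℕ) then
      h ^ (2 * γ - (α : ℕ) - (β : ℕ) - 1) *
        (((α : ℕ).factorial * (β : ℕ).factorial * (2 * γ - 2 * (α : ℕ) - 1).factorial *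
            (2 * γ - (α : ℕ) - (β : ℕ) - 2).factorial : ℕ) : ℝ) /
        ((((β : ℕ) - (α : ℕ)).factorial * (2 * γ - (α : ℕ) - 1).factorial *
            (2 * γ - (β : ℕ) - 1).factorial * (γ - (α : ℕ) - 1).factorial *
            (γ - (β : ℕ) - 1).factorial : ℕ) : ℝ)
    else 0

/-- The diagonal matrix `D̂(h)` of diagonal entries of `U(h)`. -/
noncomputable def matDhat (γ : ℕ) (h : ℝ) : Matrix (Fin γ) (Fin γ) ℝ :=
  Matrix.diagonal fun α : Fin γ =>
    h ^ (2 * γ - 2 * (α : ℕ) - 1) *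
      (((α : ℕ).factorial ^ 2 * (2 * γ - 2 * (α : ℕ) - 2).factorial *
          (2 * γ - 2 * (α : ℕ) - 1).factorial : ℕ) : ℝ) /
      ((((γ - (α : ℕ) - 1).factorial) ^ 2 * ((2 * γ - (α : ℕ) - 1).factorial) ^ 2 : ℕ) : ℝ)


lemma alt_choose_sum (N m : ℕ) (hN : 1 ≤ N) :
    ∑ j ∈ Finset.range (m+1), (-1:ℝ)^j * (N.choose j) = (-1)^m * ((N-1).choose m) := by
  induction m with
  | zero => simp
  | succ m ih =>
    rw [Finset.sum_range_succ, ih]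
    obtain ⟨n, rfl⟩ : ∃ n, N = n + 1 := ⟨N - 1, by omega⟩
    have : (n+1).choose (m+1) = n.choose m + n.choose (m+1) := Nat.choose_succ_succ n m
    simp only [Nat.add_sub_cancel] at *
    rw [this]
    push_cast
    ring

lemma key_sum (N m : ℕ) (hm : m < N) :
    ∑ j ∈ Finset.range (m+1), (-1:ℝ)^(m-j) / (j.factorial * (N-j).factorial) =
    1 / (N * m.factorial * (N-m-1).factorial) := by
  have hrw : ∀ j ∈ Finset.range (m+1), (-1:ℝ)^(m-j) / (j.factorial * (N-j).factorial)
      = ((-1)^m / N.factorial) * ((-1)^j * (N.choose j)) := by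
    intro j hj
    rw [Finset.mem_range] at hj
    have hjm : j ≤ m := by omega
    have hjN : j ≤ N := by omega
    have hsign : (-1:ℝ)^(m-j) * (-1)^j = (-1)^m := by
      rw [← pow_add]; congr 1; omega
    have hc : (N.choose j : ℝ) = N.factorial / (j.factorial * (N-j).factorial) :=
      Nat.cast_choose ℝ hjN
    rw [hc]
    have h1 : (j.factorial : ℝ) ≠ 0 := by positivity
    have h2 : ((N-j).factorial : ℝ) ≠ 0 := by positivity
    have h3 : (N.factorial : ℝ) ≠ 0 := by positivity
    have h' : (-1:ℝ)^m * (-1)^j = (-1)^(m-j) := by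
      rw [← pow_add, show m+j = (m-j)+2*j by omega, pow_add, pow_mul]; norm_num
    field_simp
    rw [← h']
  rw [Finset.sum_congr rfl hrw, ← Finset.mul_sum, alt_choose_sum N m (by omega)]
  have hc : ((N-1).choose m : ℝ) = (N-1).factorial / (m.factorial * (N-1-m).factorial) :=
    Nat.cast_choose ℝ (by omega)
  have hN : (N : ℝ) * (N-1).factorial = N.factorial := by
    obtain ⟨n, rfl⟩ : ∃ n, N = n + 1 := ⟨N - 1, by omega⟩
    push_cast [Nat.factorial_succ, Nat.add_sub_cancel]
    ring
  have hmm : N - 1 - m = N - m - 1 := by omega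
  rw [hc, hmm]
  have h1 : (m.factorial : ℝ) ≠ 0 := by positivity
  have h2 : ((N-m-1).factorial : ℝ) ≠ 0 := by positivity
  have h3 : (N.factorial : ℝ) ≠ 0 := by positivity
  have h4 : ((N-1).factorial : ℝ) ≠ 0 := by positivity
  have h5 : (N:ℝ) ≠ 0 := Nat.cast_ne_zero.mpr (by omega)
  have hm2 : (-1:ℝ)^m * (-1)^m = 1 := by rw [← pow_add, ← two_mul, pow_mul]; norm_num
  field_simp
  rw [← hN]
  linear_combination (((N-1).factorial : ℝ) * (N:ℝ)) * hm2

theorem matC_eq_matA_matD_matB (γ : ℕ) (hγ : 1 ≤ γ) (h : ℝ) :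
    matC γ h = matA γ h * matD γ * matB γ h := by
  ext α β
  rw [Matrix.mul_assoc, Matrix.mul_apply]
  simp only [matD, Matrix.diagonal_mul, matA, matB, matC]
  have ha : (α:ℕ) < γ := α.isLt
  have hb : (β:ℕ) < γ := β.isLt
  set a := (α : ℕ) with hadef
  set b := (β : ℕ) with hbdef
  set N := 2*γ - a - b - 1 with hNdef
  set m := γ - a - 1 with hmdef
  have hmN : m < N := by omega
  rw [Fin.sum_univ_eq_sum_range (fun k => (if a ≤ k then h ^ (k-a) / ((k-a).factorial:ℝ) else 0) * ((-1:ℝ)^(γ-k-1) * (h ^ (2*γ-k-b-1) / ((2*γ-k-b-1).factorial:ℝ))))]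
  rw [show ∑ k ∈ Finset.range γ, (if a ≤ k then h ^ (k-a) / ((k-a).factorial:ℝ) else 0) * ((-1:ℝ)^(γ-k-1) * (h ^ (2*γ-k-b-1) / ((2*γ-k-b-1).factorial:ℝ)))
      = ∑ k ∈ Finset.Ico a γ, (if a ≤ k then h ^ (k-a) / ((k-a).factorial:ℝ) else 0) * ((-1:ℝ)^(γ-k-1) * (h ^ (2*γ-k-b-1) / ((2*γ-k-b-1).factorial:ℝ))) from
    (Finset.sum_subset (fun x hx => by simp only [Finset.mem_Ico] at hx; simp [Finset.mem_range]; omega)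
      (fun x hx hnx => by
        simp only [Finset.mem_range] at hx
        simp only [Finset.mem_Ico, not_and, not_lt] at hnx
        rw [if_neg (by omega)]; ring)).symm]
  rw [Finset.sum_Ico_eq_sum_range, show γ - a = m + 1 by omega]
  rw [show (h ^ N / (((N * (γ - a - 1).factorial * (γ - b - 1).factorial : ℕ)):ℝ)) =
      h ^ N * (1 / ((N:ℝ) * m.factorial * (N-m-1).factorial)) from by
    push_cast
    rw [show γ - b - 1 = N - m - 1 by omega, ← hmdef]
    ring]
  rw [← key_sum N m hmN, Finset.mul_sum]
  apply Finset.sum_congr rfl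
  intro j hj
  rw [Finset.mem_range] at hj
  rw [if_pos (by omega), Nat.add_sub_cancel_left,
    show γ - (a + j) - 1 = m - j by omega,
    show 2*γ - (a + j) - b - 1 = N - j by omega]
  have hpow : h ^ j * h ^ (N - j) = h ^ N := by
    rw [← pow_add]; congr 1; omega
  have h1 : ((j.factorial : ℝ)) ≠ 0 := by positivity
  have h2 : (((N-j).factorial : ℝ)) ≠ 0 := by positivity
  field_simp
  rw [← hpow]
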